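/- Let G be a groupoid, R a set, and ω : R → G a function with ωd = ωr. For e ∈ V(G), let F_e be the free group on pairs (s,g) with s ∈ R, (sω)d = gg⁻¹ and g⁻¹g = e, with map δ : (s,g) ↦ g⁻¹(sω)g and G-action (s,g)^h = (s,gh). Let P_e be the subgroup of F_e generated by Peiffer elements u⁻¹v⁻¹u v^{uδ} for u,v ∈ F_e. Then P_e is normal in F_e, invariant under the G-action, and contained in the kernel of δ, so that δ induces a crossed G-module structure ∂ : ⊔_e F_e/P_e → G, and this crossed module is free on ω. -/

import Mathlib

/-- A groupoid given algebraically: arrows `G` over vertices `V`, with totalised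
composition whose axioms are guarded by the composability condition `r α = d β`. -/
structure AlgGroupoid (V : Type*) (G : Type*) where
  d : G → V
  r : G → V
  comp : G → G → G
  idm : V → G
  inv : G → G
  d_idm : ∀ v, d (idm v) = v
  r_idm : ∀ v, r (idm v) = v
  d_comp : ∀ α β, r α = d β → d (comp α β) = d α
  r_comp : ∀ α β, r α = d β → r (comp α β) = r β
  comp_assoc : ∀ α β γ, r α = d β → r β = d γ →
    comp (comp α β) γ = comp α (comp β γ)
  idm_comp : ∀ α, comp (idm (d α)) α = α
  comp_idm : ∀ α, comp α (idm (r α)) = α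
  d_inv : ∀ α, d (inv α) = r α
  r_inv : ∀ α, r (inv α) = d α
  comp_inv : ∀ α, comp α (inv α) = idm (d α)
  inv_comp : ∀ α, comp (inv α) α = idm (r α)

/-- A crossed module of groupoids over the groupoid `𝒢` (with vertex set `V` and arrow
set `G`): a totally intransitive groupoid `base` on arrows `C` over the same vertices
(i.e. a disjoint union of groups `C_e`, `e ∈ V`, since `d = r` on `C`), a groupoid
morphism `δ : C → G` over the identity on `V`, and an action of `G` on `C` satisfying
`(c^g)δ = g⁻¹ (cδ) g` and `c^{aδ} = a⁻¹ c a`. -/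
structure CrossedModuleOver {V G : Type*} (𝒢 : AlgGroupoid V G) (C : Type*) where
  base : AlgGroupoid V C
  fib : ∀ c : C, base.d c = base.r c
  δ : C → G
  δ_d : ∀ c, 𝒢.d (δ c) = base.d c
  δ_r : ∀ c, 𝒢.r (δ c) = base.d c
  δ_comp : ∀ c c', base.d c = base.d c' → δ (base.comp c c') = 𝒢.comp (δ c) (δ c')
  δ_idm : ∀ v, δ (base.idm v) = 𝒢.idm v
  act : C → G → C
  act_d : ∀ c g, base.d c = 𝒢.d g → base.d (act c g) = 𝒢.r g
  act_idm : ∀ c v, base.d c = v → act c (𝒢.idm v) = c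
  act_comp : ∀ c g h, base.d c = 𝒢.d g → 𝒢.r g = 𝒢.d h →
    act c (𝒢.comp g h) = act (act c g) h
  act_mul : ∀ c c' g, base.d c = base.d c' → base.d c = 𝒢.d g →
    act (base.comp c c') g = base.comp (act c g) (act c' g)
  act_one : ∀ v g, v = 𝒢.d g → act (base.idm v) g = base.idm (𝒢.r g)
  cm1 : ∀ c g, base.d c = 𝒢.d g →
    δ (act c g) = 𝒢.comp (𝒢.comp (𝒢.inv g) (δ c)) g
  cm2 : ∀ c a, base.d c = base.d a →
    act c (δ a) = base.comp (base.comp (base.inv a) c) a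

variable {V G : Type*}

/-- The local group of the groupoid `𝒢` at a vertex `e`. -/
def LocalGroup (𝒢 : AlgGroupoid V G) (e : V) : Type _ :=
  {g : G // 𝒢.d g = e ∧ 𝒢.r g = e}

instance (𝒢 : AlgGroupoid V G) (e : V) : Group (LocalGroup 𝒢 e) where
  one := ⟨𝒢.idm e, 𝒢.d_idm e, 𝒢.r_idm e⟩
  mul a b := ⟨𝒢.comp a.1 b.1, by
    have hg : 𝒢.r a.1 = 𝒢.d b.1 := by rw [a.2.2, b.2.1]
    rw [𝒢.d_comp _ _ hg]; exact a.2.1, by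
    have hg : 𝒢.r a.1 = 𝒢.d b.1 := by rw [a.2.2, b.2.1]
    rw [𝒢.r_comp _ _ hg]; exact b.2.2⟩
  inv a := ⟨𝒢.inv a.1, by rw [𝒢.d_inv]; exact a.2.2, by rw [𝒢.r_inv]; exact a.2.1⟩
  mul_assoc a b c := by
    apply Subtype.ext
    exact 𝒢.comp_assoc a.1 b.1 c.1 (by rw [a.2.2, b.2.1]) (by rw [b.2.2, c.2.1])
  one_mul a := by
    apply Subtype.ext
    have h := 𝒢.idm_comp a.1
    rw [a.2.1] at h
    exact h
  mul_one a := by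
    apply Subtype.ext
    have h := 𝒢.comp_idm a.1
    rw [a.2.2] at h
    exact h
  inv_mul_cancel a := by
    apply Subtype.ext
    have h := 𝒢.inv_comp a.1
    rw [a.2.2] at h
    exact h

variable {R : Type*}

/-- The pairs `(s, g)` with `s ∈ R`, `(sω)d = gg⁻¹` and `g⁻¹g = e`, i.e.
`d (ω s) = d g` and `r g = e`. -/
def Pairs (𝒢 : AlgGroupoid V G) (ω : R → G) (e : V) : Type _ :=
  {p : R × G // 𝒢.d (ω p.1) = 𝒢.d p.2 ∧ 𝒢.r p.2 = e}

/-- The map `δ` on generators: `(s, g) ↦ g⁻¹ (sω) g`. -/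
def deltaGen (𝒢 : AlgGroupoid V G) (ω : R → G) (hω : ∀ s, 𝒢.d (ω s) = 𝒢.r (ω s))
    (e : V) (p : Pairs 𝒢 ω e) : LocalGroup 𝒢 e := by
  refine ⟨𝒢.comp (𝒢.comp (𝒢.inv p.1.2) (ω p.1.1)) p.1.2, ?_, ?_⟩
  · have h1 : 𝒢.r (𝒢.inv p.1.2) = 𝒢.d (ω p.1.1) := by rw [𝒢.r_inv]; exact p.2.1.symm
    have h2 : 𝒢.r (𝒢.comp (𝒢.inv p.1.2) (ω p.1.1)) = 𝒢.d p.1.2 := by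
      rw [𝒢.r_comp _ _ h1, ← hω p.1.1]; exact p.2.1
    rw [𝒢.d_comp _ _ h2, 𝒢.d_comp _ _ h1, 𝒢.d_inv]; exact p.2.2
  · have h1 : 𝒢.r (𝒢.inv p.1.2) = 𝒢.d (ω p.1.1) := by rw [𝒢.r_inv]; exact p.2.1.symm
    have h2 : 𝒢.r (𝒢.comp (𝒢.inv p.1.2) (ω p.1.1)) = 𝒢.d p.1.2 := by
      rw [𝒢.r_comp _ _ h1, ← hω p.1.1]; exact p.2.1
    rw [𝒢.r_comp _ _ h2]; exact p.2.2

/-- The homomorphism `δ : F_e →* LocalGroup 𝒢 e` induced on the free group. -/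
noncomputable def deltaHom (𝒢 : AlgGroupoid V G) (ω : R → G)
    (hω : ∀ s, 𝒢.d (ω s) = 𝒢.r (ω s)) (e : V) :
    FreeGroup (Pairs 𝒢 ω e) →* LocalGroup 𝒢 e :=
  FreeGroup.lift (deltaGen 𝒢 ω hω e)

/-- The action of the local group at `e` on generators: `(s, g)^h = (s, gh)`. -/
def conjAct (𝒢 : AlgGroupoid V G) (ω : R → G) (e : V) (h : LocalGroup 𝒢 e) :
    FreeGroup (Pairs 𝒢 ω e) →* FreeGroup (Pairs 𝒢 ω e) :=
  FreeGroup.map fun p => ⟨(p.1.1, 𝒢.comp p.1.2 h.1), by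
    have hg : 𝒢.r p.1.2 = 𝒢.d h.1 := by rw [p.2.2, h.2.1]
    exact ⟨by rw [𝒢.d_comp _ _ hg]; exact p.2.1, by rw [𝒢.r_comp _ _ hg]; exact h.2.2⟩⟩

/-- The `G`-action of an arrow `h` on free groups: `F_{d h} → F_{r h}`, `(s,g) ↦ (s, gh)`. -/
def mapAlong (𝒢 : AlgGroupoid V G) (ω : R → G) (h : G) :
    FreeGroup (Pairs 𝒢 ω (𝒢.d h)) →* FreeGroup (Pairs 𝒢 ω (𝒢.r h)) :=
  FreeGroup.map fun p => ⟨(p.1.1, 𝒢.comp p.1.2 h), by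
    exact ⟨by rw [𝒢.d_comp _ _ p.2.2]; exact p.2.1, by rw [𝒢.r_comp _ _ p.2.2]⟩⟩

/-- The Peiffer subgroup `P_e ≤ F_e`, generated by the elements
`u⁻¹ v⁻¹ u v^{uδ}`. -/
noncomputable def peifferSubgroup (𝒢 : AlgGroupoid V G) (ω : R → G)
    (hω : ∀ s, 𝒢.d (ω s) = 𝒢.r (ω s)) (e : V) :
    Subgroup (FreeGroup (Pairs 𝒢 ω e)) :=
  Subgroup.closure
    {x | ∃ u v : FreeGroup (Pairs 𝒢 ω e),
      x = u⁻¹ * v⁻¹ * u * conjAct 𝒢 ω e (deltaHom 𝒢 ω hω e u) v}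

universe u

/-! ### Auxiliary groupoid lemmas -/

namespace AlgGroupoid

variable (𝒢 : AlgGroupoid V G)

lemma idm_comp' {a : G} {v : V} (h : 𝒢.d a = v) : 𝒢.comp (𝒢.idm v) a = a := by
  subst h; exact 𝒢.idm_comp a

lemma comp_idm' {a : G} {v : V} (h : 𝒢.r a = v) : 𝒢.comp a (𝒢.idm v) = a := by
  subst h; exact 𝒢.comp_idm a

lemma inv_eq {a b : G} (hab : 𝒢.r a = 𝒢.d b) (h : 𝒢.comp a b = 𝒢.idm (𝒢.d a)) :
    b = 𝒢.inv a := by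
  have h2 : 𝒢.comp (𝒢.inv a) (𝒢.comp a b) = 𝒢.comp (𝒢.inv a) (𝒢.idm (𝒢.d a)) := by rw [h]
  rwa [← 𝒢.comp_assoc _ _ _ (by rw [𝒢.r_inv]) hab, 𝒢.inv_comp,
    𝒢.idm_comp' hab.symm, 𝒢.comp_idm' (𝒢.r_inv a)] at h2

lemma inv_comp_rev {a b : G} (hab : 𝒢.r a = 𝒢.d b) :
    𝒢.inv (𝒢.comp a b) = 𝒢.comp (𝒢.inv b) (𝒢.inv a) := by
  have hbb : 𝒢.r (𝒢.inv b) = 𝒢.d (𝒢.inv a) := by rw [𝒢.r_inv, 𝒢.d_inv, hab]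
  have h1 : 𝒢.d (𝒢.comp (𝒢.inv b) (𝒢.inv a)) = 𝒢.r b := by
    rw [𝒢.d_comp _ _ hbb, 𝒢.d_inv]
  symm
  apply 𝒢.inv_eq
  · rw [𝒢.r_comp _ _ hab, h1]
  · rw [𝒢.d_comp _ _ hab,
      𝒢.comp_assoc a b _ hab h1.symm,
      ← 𝒢.comp_assoc b (𝒢.inv b) (𝒢.inv a) (by rw [𝒢.d_inv]) hbb,
      𝒢.comp_inv, 𝒢.idm_comp' (by rw [𝒢.d_inv]; exact hab), 𝒢.comp_inv]

/-- Conjugation `g⁻¹ x g` in a groupoid. -/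
def conj (x g : G) : G := 𝒢.comp (𝒢.comp (𝒢.inv g) x) g

lemma d_conj {x g : G} (hd : 𝒢.d x = 𝒢.d g) (hr : 𝒢.r x = 𝒢.d g) :
    𝒢.d (𝒢.conj x g) = 𝒢.r g := by
  have h1 : 𝒢.r (𝒢.inv g) = 𝒢.d x := by rw [𝒢.r_inv, hd]
  have h2 : 𝒢.r (𝒢.comp (𝒢.inv g) x) = 𝒢.d g := by rw [𝒢.r_comp _ _ h1, hr]
  simp only [conj]
  rw [𝒢.d_comp _ _ h2, 𝒢.d_comp _ _ h1, 𝒢.d_inv]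

lemma r_conj {x g : G} (hd : 𝒢.d x = 𝒢.d g) (hr : 𝒢.r x = 𝒢.d g) :
    𝒢.r (𝒢.conj x g) = 𝒢.r g := by
  have h1 : 𝒢.r (𝒢.inv g) = 𝒢.d x := by rw [𝒢.r_inv, hd]
  have h2 : 𝒢.r (𝒢.comp (𝒢.inv g) x) = 𝒢.d g := by rw [𝒢.r_comp _ _ h1, hr]
  simp only [conj]
  rw [𝒢.r_comp _ _ h2]

lemma comp_conj {p q g : G} (hp : 𝒢.r p = 𝒢.d g) (hq : 𝒢.d q = 𝒢.d g)
    (hrq : 𝒢.r q = 𝒢.d g) :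
    𝒢.comp (𝒢.comp p g) (𝒢.conj q g) = 𝒢.comp (𝒢.comp p q) g := by
  simp only [conj]
  rw [𝒢.comp_assoc (𝒢.inv g) q g (by rw [𝒢.r_inv, hq]) hrq]
  rw [← 𝒢.comp_assoc (𝒢.comp p g) (𝒢.inv g) (𝒢.comp q g)
      (by rw [𝒢.r_comp _ _ hp, 𝒢.d_inv])
      (by rw [𝒢.r_inv, 𝒢.d_comp _ _ hrq, hq]),
    𝒢.comp_assoc p g (𝒢.inv g) hp (by rw [𝒢.d_inv]),
    𝒢.comp_inv, 𝒢.comp_idm' hp,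
    ← 𝒢.comp_assoc p q g (by rw [hp, hq]) hrq]

lemma conj_mul {x y g : G} (hx : 𝒢.d x = 𝒢.d g) (hrx : 𝒢.r x = 𝒢.d g)
    (hy : 𝒢.d y = 𝒢.d g) (hry : 𝒢.r y = 𝒢.d g) :
    𝒢.conj (𝒢.comp x y) g = 𝒢.comp (𝒢.conj x g) (𝒢.conj y g) := by
  have hp : 𝒢.r (𝒢.comp (𝒢.inv g) x) = 𝒢.d g := by
    rw [𝒢.r_comp _ _ (by rw [𝒢.r_inv, hx]), hrx]
  have key := 𝒢.comp_conj (p := 𝒢.comp (𝒢.inv g) x) (q := y) (g := g) hp hy hry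
  show 𝒢.comp (𝒢.comp (𝒢.inv g) (𝒢.comp x y)) g = _
  rw [← 𝒢.comp_assoc (𝒢.inv g) x y (by rw [𝒢.r_inv, hx]) (by rw [hrx, hy]), ← key]
  rfl

lemma conj_comp {x g h : G} (hd : 𝒢.d x = 𝒢.d g) (hr : 𝒢.r x = 𝒢.d g)
    (hgh : 𝒢.r g = 𝒢.d h) :
    𝒢.conj (𝒢.conj x g) h = 𝒢.conj x (𝒢.comp g h) := by
  simp only [conj]
  rw [𝒢.inv_comp_rev hgh]
  have h1 : 𝒢.r (𝒢.inv h) = 𝒢.d (𝒢.inv g) := by rw [𝒢.r_inv, 𝒢.d_inv, hgh]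
  have h2 : 𝒢.r (𝒢.comp (𝒢.inv h) (𝒢.inv g)) = 𝒢.d x := by
    rw [𝒢.r_comp _ _ h1, 𝒢.r_inv, hd]
  have h3 : 𝒢.r (𝒢.comp (𝒢.comp (𝒢.inv h) (𝒢.inv g)) x) = 𝒢.d g := by
    rw [𝒢.r_comp _ _ h2, hr]
  rw [← 𝒢.comp_assoc _ g h h3 hgh,
    ← 𝒢.comp_assoc (𝒢.inv h) (𝒢.comp (𝒢.inv g) x) g
      (by rw [𝒢.r_inv, 𝒢.d_comp _ _ (by rw [𝒢.r_inv, hd]), 𝒢.d_inv, hgh])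
      (by rw [𝒢.r_comp _ _ (by rw [𝒢.r_inv, hd]), hr]),
    ← 𝒢.comp_assoc (𝒢.inv h) (𝒢.inv g) x h1 (by rw [𝒢.r_inv, hd])]

lemma conj_idm {g : G} {v : V} (h : 𝒢.d g = v) :
    𝒢.conj (𝒢.idm v) g = 𝒢.idm (𝒢.r g) := by
  simp only [conj]
  rw [𝒢.comp_idm' (by rw [𝒢.r_inv, h]), 𝒢.inv_comp]

end AlgGroupoid

lemma freeGroup_pure_eq_of {α : Type*} (p : α) :
    (pure p : FreeGroup α) = FreeGroup.of p := rfl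

@[simp] lemma LocalGroup.one_val (𝒢 : AlgGroupoid V G) (e : V) :
    (1 : LocalGroup 𝒢 e).1 = 𝒢.idm e := rfl

@[simp] lemma LocalGroup.mul_val (𝒢 : AlgGroupoid V G) (e : V)
    (a b : LocalGroup 𝒢 e) : (a * b).1 = 𝒢.comp a.1 b.1 := rfl

@[simp] lemma LocalGroup.inv_val (𝒢 : AlgGroupoid V G) (e : V)
    (a : LocalGroup 𝒢 e) : (a⁻¹).1 = 𝒢.inv a.1 := rfl

/-- Conjugation by an arrow `h` as a homomorphism of local groups. -/
def conjHom (𝒢 : AlgGroupoid V G) (h : G) :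
    LocalGroup 𝒢 (𝒢.d h) →* LocalGroup 𝒢 (𝒢.r h) where
  toFun c := ⟨𝒢.conj c.1 h, 𝒢.d_conj c.2.1 c.2.2, 𝒢.r_conj c.2.1 c.2.2⟩
  map_one' := Subtype.ext (𝒢.conj_idm rfl)
  map_mul' a b := Subtype.ext (𝒢.conj_mul a.2.1 a.2.2 b.2.1 b.2.2)

section Aux

variable (𝒢 : AlgGroupoid V G) (ω : R → G) (hω : ∀ s, 𝒢.d (ω s) = 𝒢.r (ω s))

lemma deltaGen_val (e : V) (p : Pairs 𝒢 ω e) :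
    (deltaGen 𝒢 ω hω e p).1 = 𝒢.conj (ω p.1.1) p.1.2 := rfl

lemma deltaHom_of (e : V) (p : Pairs 𝒢 ω e) :
    deltaHom 𝒢 ω hω e (FreeGroup.of p) = deltaGen 𝒢 ω hω e p :=
  FreeGroup.lift_apply_of

/-- The letter map underlying `conjAct`. -/
def shiftPair (e : V) (h : LocalGroup 𝒢 e) (p : Pairs 𝒢 ω e) : Pairs 𝒢 ω e :=
  ⟨(p.1.1, 𝒢.comp p.1.2 h.1), by
    have hg : 𝒢.r p.1.2 = 𝒢.d h.1 := by rw [p.2.2, h.2.1]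
    exact ⟨by rw [𝒢.d_comp _ _ hg]; exact p.2.1,
      by rw [𝒢.r_comp _ _ hg]; exact h.2.2⟩⟩

lemma conjAct_of (e : V) (h : LocalGroup 𝒢 e) (p : Pairs 𝒢 ω e) :
    conjAct 𝒢 ω e h (FreeGroup.of p) = FreeGroup.of (shiftPair 𝒢 ω e h p) :=
  FreeGroup.map.of

/-- The letter map underlying `mapAlong`. -/
def alongPair (h : G) (p : Pairs 𝒢 ω (𝒢.d h)) : Pairs 𝒢 ω (𝒢.r h) :=
  ⟨(p.1.1, 𝒢.comp p.1.2 h),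
    ⟨by rw [𝒢.d_comp _ _ p.2.2]; exact p.2.1, by rw [𝒢.r_comp _ _ p.2.2]⟩⟩

lemma mapAlong_of (h : G) (p : Pairs 𝒢 ω (𝒢.d h)) :
    mapAlong 𝒢 ω h (FreeGroup.of p) = FreeGroup.of (alongPair 𝒢 ω h p) :=
  FreeGroup.map.of

lemma deltaHom_conjAct (e : V) (h : LocalGroup 𝒢 e) (x : FreeGroup (Pairs 𝒢 ω e)) :
    deltaHom 𝒢 ω hω e (conjAct 𝒢 ω e h x) = h⁻¹ * deltaHom 𝒢 ω hω e x * h := by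
  induction x using FreeGroup.induction_on with
  | C1 => simp
  | of p =>
    rw [conjAct_of, deltaHom_of, deltaHom_of]
    exact Subtype.ext
      (𝒢.conj_comp p.2.1 ((hω p.1.1).symm.trans p.2.1) (p.2.2.trans h.2.1.symm)).symm
  | inv_of p ih => simp only [map_inv]; rw [ih]; group
  | mul x y ihx ihy => simp only [map_mul]; rw [ihx, ihy]; group

lemma deltaHom_mapAlong (h : G) (x : FreeGroup (Pairs 𝒢 ω (𝒢.d h))) :
    deltaHom 𝒢 ω hω (𝒢.r h) (mapAlong 𝒢 ω h x) =
      conjHom 𝒢 h (deltaHom 𝒢 ω hω (𝒢.d h) x) := by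
  induction x using FreeGroup.induction_on with
  | C1 => simp
  | of p =>
    rw [mapAlong_of, deltaHom_of, deltaHom_of]
    exact Subtype.ext
      (𝒢.conj_comp p.2.1 ((hω p.1.1).symm.trans p.2.1) p.2.2).symm
  | inv_of p ih => simp only [map_inv]; rw [ih]
  | mul x y ihx ihy => simp only [map_mul]; rw [ihx, ihy]

lemma mapAlong_conjAct (h : G) (k : LocalGroup 𝒢 (𝒢.d h))
    (x : FreeGroup (Pairs 𝒢 ω (𝒢.d h))) :
    mapAlong 𝒢 ω h (conjAct 𝒢 ω (𝒢.d h) k x) =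
      conjAct 𝒢 ω (𝒢.r h) (conjHom 𝒢 h k) (mapAlong 𝒢 ω h x) := by
  induction x using FreeGroup.induction_on with
  | C1 => simp
  | of p =>
    rw [conjAct_of, mapAlong_of, mapAlong_of, conjAct_of]
    exact congrArg FreeGroup.of (Subtype.ext
      (Prod.ext rfl (𝒢.comp_conj p.2.2 k.2.1 k.2.2).symm))
  | inv_of p ih => simp only [map_inv]; rw [ih]
  | mul x y ihx ihy => simp only [map_mul]; rw [ihx, ihy]

lemma conjAct_mul (e : V) (h₁ h₂ : LocalGroup 𝒢 e) (x : FreeGroup (Pairs 𝒢 ω e)) :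
    conjAct 𝒢 ω e (h₁ * h₂) x = conjAct 𝒢 ω e h₂ (conjAct 𝒢 ω e h₁ x) := by
  induction x using FreeGroup.induction_on with
  | C1 => simp
  | of p =>
    rw [conjAct_of, conjAct_of, conjAct_of]
    exact congrArg FreeGroup.of (Subtype.ext (Prod.ext rfl
      (𝒢.comp_assoc p.1.2 h₁.1 h₂.1 (p.2.2.trans h₁.2.1.symm)
        (h₁.2.2.trans h₂.2.1.symm)).symm))
  | inv_of p ih => simp only [map_inv]; rw [ih]
  | mul x y ihx ihy => simp only [map_mul]; rw [ihx, ihy]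

lemma peiffer_gen_mem (e : V) (u v : FreeGroup (Pairs 𝒢 ω e)) :
    u⁻¹ * v⁻¹ * u * conjAct 𝒢 ω e (deltaHom 𝒢 ω hω e u) v ∈
      peifferSubgroup 𝒢 ω hω e :=
  Subgroup.subset_closure ⟨u, v, rfl⟩

lemma peiffer_conj_identity (e : V) (u v w : FreeGroup (Pairs 𝒢 ω e)) :
    w⁻¹ * (u⁻¹ * v⁻¹ * u * conjAct 𝒢 ω e (deltaHom 𝒢 ω hω e u) v) * w =
      ((u * w)⁻¹ * v⁻¹ * (u * w) *
          conjAct 𝒢 ω e (deltaHom 𝒢 ω hω e (u * w)) v) *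
        (w⁻¹ * (conjAct 𝒢 ω e (deltaHom 𝒢 ω hω e u) v)⁻¹ * w *
          conjAct 𝒢 ω e (deltaHom 𝒢 ω hω e w)
            (conjAct 𝒢 ω e (deltaHom 𝒢 ω hω e u) v))⁻¹ := by
  rw [map_mul, conjAct_mul]
  generalize conjAct 𝒢 ω e (deltaHom 𝒢 ω hω e w)
    (conjAct 𝒢 ω e (deltaHom 𝒢 ω hω e u) v) = c₂
  generalize conjAct 𝒢 ω e (deltaHom 𝒢 ω hω e u) v = c₁
  group

lemma peiffer_normal (e : V) : (peifferSubgroup 𝒢 ω hω e).Normal := by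
  constructor
  intro n hn g
  induction hn using Subgroup.closure_induction with
  | mem x hx =>
    obtain ⟨u, v, rfl⟩ := hx
    have key := peiffer_conj_identity 𝒢 ω hω e u v g⁻¹
    conv_lhs at key => rw [inv_inv]
    rw [key]
    exact mul_mem (peiffer_gen_mem 𝒢 ω hω e (u * g⁻¹) v)
      (inv_mem (peiffer_gen_mem 𝒢 ω hω e g⁻¹ _))
  | one => simpa using one_mem _
  | mul x y hx hy ihx ihy =>
    have hxy : g * (x * y) * g⁻¹ = (g * x * g⁻¹) * (g * y * g⁻¹) := by group
    rw [hxy]; exact mul_mem ihx ihy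
  | inv x hx ihx =>
    have hxi : g * x⁻¹ * g⁻¹ = (g * x * g⁻¹)⁻¹ := by group
    rw [hxi]; exact inv_mem ihx

lemma peiffer_mapAlong (h : G) (x : FreeGroup (Pairs 𝒢 ω (𝒢.d h)))
    (hx : x ∈ peifferSubgroup 𝒢 ω hω (𝒢.d h)) :
    mapAlong 𝒢 ω h x ∈ peifferSubgroup 𝒢 ω hω (𝒢.r h) := by
  induction hx using Subgroup.closure_induction with
  | mem x hx =>
    obtain ⟨u, v, rfl⟩ := hx
    rw [map_mul, map_mul, map_mul, map_inv, map_inv,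
      mapAlong_conjAct, ← deltaHom_mapAlong]
    exact peiffer_gen_mem 𝒢 ω hω (𝒢.r h) (mapAlong 𝒢 ω h u) (mapAlong 𝒢 ω h v)
  | one => simpa using one_mem _
  | mul x y hx hy ihx ihy => rw [map_mul]; exact mul_mem ihx ihy
  | inv x hx ihx => rw [map_inv]; exact inv_mem ihx

lemma peiffer_ker (e : V) (x : FreeGroup (Pairs 𝒢 ω e))
    (hx : x ∈ peifferSubgroup 𝒢 ω hω e) : deltaHom 𝒢 ω hω e x = 1 := by
  induction hx using Subgroup.closure_induction with
  | mem x hx =>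
    obtain ⟨u, v, rfl⟩ := hx
    rw [map_mul, map_mul, map_mul, map_inv, map_inv, deltaHom_conjAct]
    group
  | one => simp
  | mul x y hx hy ihx ihy => rw [map_mul, ihx, ihy, mul_one]
  | inv x hx ihx => rw [map_inv, ihx, inv_one]

end Aux

section Freeness

variable (𝒢 : AlgGroupoid V G) {C' : Type*} (Y : CrossedModuleOver 𝒢 C')

/-- `Y.δ` as a homomorphism of local groups. -/
def deltaY (e : V) : LocalGroup Y.base e →* LocalGroup 𝒢 e where
  toFun c := ⟨Y.δ c.1, by rw [Y.δ_d]; exact c.2.1, by rw [Y.δ_r]; exact c.2.1⟩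
  map_one' := Subtype.ext (Y.δ_idm e)
  map_mul' a b := Subtype.ext (Y.δ_comp a.1 b.1 (a.2.1.trans b.2.1.symm))

/-- The action of an arrow `h` on local groups of `Y.base`, as a homomorphism. -/
def actY (h : G) : LocalGroup Y.base (𝒢.d h) →* LocalGroup Y.base (𝒢.r h) where
  toFun c := ⟨Y.act c.1 h, by rw [Y.act_d c.1 h c.2.1],
    by rw [← Y.fib, Y.act_d c.1 h c.2.1]⟩
  map_one' := Subtype.ext (Y.act_one (𝒢.d h) h rfl)
  map_mul' a b := Subtype.ext (Y.act_mul a.1 b.1 h (a.2.1.trans b.2.1.symm) a.2.1)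

/-- The action of a local arrow `h` at `e` on the local group of `Y.base` at `e`. -/
def actYL (e : V) (h : LocalGroup 𝒢 e) :
    LocalGroup Y.base e →* LocalGroup Y.base e where
  toFun c := ⟨Y.act c.1 h.1,
    by rw [Y.act_d c.1 h.1 (c.2.1.trans h.2.1.symm), h.2.2],
    by rw [← Y.fib, Y.act_d c.1 h.1 (c.2.1.trans h.2.1.symm), h.2.2]⟩
  map_one' := Subtype.ext ((Y.act_one e h.1 h.2.1.symm).trans (by rw [h.2.2]; rfl))
  map_mul' a b := Subtype.ext
    (Y.act_mul a.1 b.1 h.1 (a.2.1.trans b.2.1.symm) (a.2.1.trans h.2.1.symm))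

variable (ω : R → G) (hω : ∀ s, 𝒢.d (ω s) = 𝒢.r (ω s)) (σ : R → C')
  (hσd : ∀ s, Y.base.d (σ s) = 𝒢.d (ω s)) (hσδ : ∀ s, Y.δ (σ s) = ω s)

/-- The generator map for the universal property. -/
def phiGen (e : V) (p : Pairs 𝒢 ω e) : LocalGroup Y.base e :=
  ⟨Y.act (σ p.1.1) p.1.2, by
    rw [Y.act_d (σ p.1.1) p.1.2 ((hσd p.1.1).trans p.2.1)]; exact p.2.2, by
    rw [← Y.fib, Y.act_d (σ p.1.1) p.1.2 ((hσd p.1.1).trans p.2.1)]; exact p.2.2⟩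

/-- The induced homomorphism on free groups. -/
noncomputable def phiHom (e : V) : FreeGroup (Pairs 𝒢 ω e) →* LocalGroup Y.base e :=
  FreeGroup.lift (phiGen 𝒢 Y ω σ hσd e)

lemma phiHom_of (e : V) (p : Pairs 𝒢 ω e) :
    phiHom 𝒢 Y ω σ hσd e (FreeGroup.of p) = phiGen 𝒢 Y ω σ hσd e p :=
  FreeGroup.lift_apply_of

lemma phi_delta (hσδ : ∀ s, Y.δ (σ s) = ω s) (e : V) (x : FreeGroup (Pairs 𝒢 ω e)) :
    deltaY 𝒢 Y e (phiHom 𝒢 Y ω σ hσd e x) = deltaHom 𝒢 ω hω e x := by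
  induction x using FreeGroup.induction_on with
  | C1 => simp
  | of p =>
    rw [phiHom_of, deltaHom_of]
    apply Subtype.ext
    show Y.δ (Y.act (σ p.1.1) p.1.2) = (deltaGen 𝒢 ω hω e p).1
    rw [Y.cm1 (σ p.1.1) p.1.2 ((hσd p.1.1).trans p.2.1), hσδ p.1.1]
    rfl
  | inv_of p ih => simp only [map_inv]; rw [ih]
  | mul x y ihx ihy => simp only [map_mul]; rw [ihx, ihy]

lemma phi_conjAct (e : V) (h : LocalGroup 𝒢 e) (x : FreeGroup (Pairs 𝒢 ω e)) :
    phiHom 𝒢 Y ω σ hσd e (conjAct 𝒢 ω e h x) =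
      actYL 𝒢 Y e h (phiHom 𝒢 Y ω σ hσd e x) := by
  induction x using FreeGroup.induction_on with
  | C1 => simp
  | of p =>
    rw [conjAct_of, phiHom_of, phiHom_of]
    apply Subtype.ext
    show Y.act (σ p.1.1) (𝒢.comp p.1.2 h.1) = Y.act (Y.act (σ p.1.1) p.1.2) h.1
    rw [Y.act_comp (σ p.1.1) p.1.2 h.1 ((hσd p.1.1).trans p.2.1)
      (p.2.2.trans h.2.1.symm)]
  | inv_of p ih => simp only [map_inv]; rw [ih]
  | mul x y ihx ihy => simp only [map_mul]; rw [ihx, ihy]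

lemma phi_mapAlong (h : G) (x : FreeGroup (Pairs 𝒢 ω (𝒢.d h))) :
    phiHom 𝒢 Y ω σ hσd (𝒢.r h) (mapAlong 𝒢 ω h x) =
      actY 𝒢 Y h (phiHom 𝒢 Y ω σ hσd (𝒢.d h) x) := by
  induction x using FreeGroup.induction_on with
  | C1 => simp
  | of p =>
    rw [mapAlong_of, phiHom_of, phiHom_of]
    apply Subtype.ext
    show Y.act (σ p.1.1) (𝒢.comp p.1.2 h) = Y.act (Y.act (σ p.1.1) p.1.2) h
    rw [Y.act_comp (σ p.1.1) p.1.2 h ((hσd p.1.1).trans p.2.1) p.2.2]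
  | inv_of p ih => simp only [map_inv]; rw [ih]
  | mul x y ihx ihy => simp only [map_mul]; rw [ihx, ihy]

lemma phi_actYL_delta (hσδ : ∀ s, Y.δ (σ s) = ω s) (e : V) (u v : FreeGroup (Pairs 𝒢 ω e)) :
    actYL 𝒢 Y e (deltaHom 𝒢 ω hω e u) (phiHom 𝒢 Y ω σ hσd e v) =
      (phiHom 𝒢 Y ω σ hσd e u)⁻¹ * phiHom 𝒢 Y ω σ hσd e v *
        phiHom 𝒢 Y ω σ hσd e u := by
  apply Subtype.ext
  have hd : (deltaHom 𝒢 ω hω e u).1 = Y.δ (phiHom 𝒢 Y ω σ hσd e u).1 :=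
    congrArg Subtype.val (phi_delta 𝒢 Y ω hω σ hσd hσδ e u).symm
  show Y.act (phiHom 𝒢 Y ω σ hσd e v).1 (deltaHom 𝒢 ω hω e u).1 = _
  rw [hd, Y.cm2 (phiHom 𝒢 Y ω σ hσd e v).1 (phiHom 𝒢 Y ω σ hσd e u).1
    ((phiHom 𝒢 Y ω σ hσd e v).2.1.trans (phiHom 𝒢 Y ω σ hσd e u).2.1.symm)]
  rfl

lemma phi_peiffer (hσδ : ∀ s, Y.δ (σ s) = ω s) (e : V) (x : FreeGroup (Pairs 𝒢 ω e))
    (hx : x ∈ peifferSubgroup 𝒢 ω hω e) : phiHom 𝒢 Y ω σ hσd e x = 1 := by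
  induction hx using Subgroup.closure_induction with
  | mem x hx =>
    obtain ⟨u, v, rfl⟩ := hx
    rw [map_mul, map_mul, map_mul, map_inv, map_inv,
      phi_conjAct, phi_actYL_delta 𝒢 Y ω hω σ hσd hσδ]
    group
  | one => simp
  | mul x y hx hy ihx ihy => rw [map_mul, ihx, ihy, mul_one]
  | inv x hx ihx => rw [map_inv, ihx, inv_one]

end Freeness
/-- the Peiffer subgroup `P_e` is normal in `F_e`, invariant under the
`G`-action, and contained in the kernel of `δ`; `δ` and the action satisfy the crossed
module identities modulo `P` (CM1 on the nose, CM2 modulo `P_e`); and the induced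
crossed module `⊔_e F_e/P_e → G` is free on `ω`, expressed by the universal property:
for every crossed `G`-module `Y` and every `σ : R → C'` with `σ∂' = ω`, there is a
unique family of maps `Φ_e : F_e → C'` which kills `P_e` (hence factors through
`F_e/P_e`), is a morphism of crossed modules, and sends the generator `(s,g)` to
`(σ s)^g`. -/
theorem stmt14 {V G R : Type u} (𝒢 : AlgGroupoid V G) (ω : R → G)
    (hω : ∀ s, 𝒢.d (ω s) = 𝒢.r (ω s)) :
    -- P_e is normal
    (∀ e : V, (peifferSubgroup 𝒢 ω hω e).Normal) ∧
    -- P is invariant under the G-action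
    (∀ h : G, ∀ x ∈ peifferSubgroup 𝒢 ω hω (𝒢.d h),
      mapAlong 𝒢 ω h x ∈ peifferSubgroup 𝒢 ω hω (𝒢.r h)) ∧
    -- P_e is contained in the kernel of δ
    (∀ (e : V) (x : FreeGroup (Pairs 𝒢 ω e)),
      x ∈ peifferSubgroup 𝒢 ω hω e → deltaHom 𝒢 ω hω e x = 1) ∧
    -- CM1: δ is equivariant for the G-action
    (∀ (h : G) (x : FreeGroup (Pairs 𝒢 ω (𝒢.d h))),
      (deltaHom 𝒢 ω hω (𝒢.r h) (mapAlong 𝒢 ω h x)).1 =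
        𝒢.comp (𝒢.comp (𝒢.inv h) ((deltaHom 𝒢 ω hω (𝒢.d h) x).1)) h) ∧
    -- CM2 holds modulo P_e
    (∀ (e : V) (u v : FreeGroup (Pairs 𝒢 ω e)),
      conjAct 𝒢 ω e (deltaHom 𝒢 ω hω e u) v * (u⁻¹ * v * u)⁻¹ ∈
        peifferSubgroup 𝒢 ω hω e) ∧
    -- freeness of the induced crossed module ⊔_e F_e/P_e → G on ω
    (∀ (C' : Type u) (Y : CrossedModuleOver 𝒢 C') (σ : R → C'),
      (∀ s, Y.base.d (σ s) = 𝒢.d (ω s)) → (∀ s, Y.δ (σ s) = ω s) →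
      ∃! Φ : ∀ e : V, FreeGroup (Pairs 𝒢 ω e) → C',
        (∀ e x, Y.base.d (Φ e x) = e) ∧
        (∀ e x y, Φ e (x * y) = Y.base.comp (Φ e x) (Φ e y)) ∧
        (∀ e x, Φ e (x⁻¹) = Y.base.inv (Φ e x)) ∧
        (∀ e x, x ∈ peifferSubgroup 𝒢 ω hω e → Φ e x = Y.base.idm e) ∧
        (∀ e x, Y.δ (Φ e x) = (deltaHom 𝒢 ω hω e x).1) ∧
        (∀ (h : G) (x : FreeGroup (Pairs 𝒢 ω (𝒢.d h))),
          Φ (𝒢.r h) (mapAlong 𝒢 ω h x) = Y.act (Φ (𝒢.d h) x) h) ∧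
        (∀ (e : V) (p : Pairs 𝒢 ω e),
          Φ e (FreeGroup.of p) = Y.act (σ p.1.1) p.1.2)) := by
  refine ⟨peiffer_normal 𝒢 ω hω, peiffer_mapAlong 𝒢 ω hω, peiffer_ker 𝒢 ω hω,
    ?_, ?_, ?_⟩
  · intro h x
    rw [deltaHom_mapAlong 𝒢 ω hω h x]
    rfl
  · intro e u v
    have hp := peiffer_gen_mem 𝒢 ω hω e u v
    have hn := peiffer_normal 𝒢 ω hω e
    have key := hn.conj_mem _ hp (conjAct 𝒢 ω e (deltaHom 𝒢 ω hω e u) v)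
    have hre : conjAct 𝒢 ω e (deltaHom 𝒢 ω hω e u) v * (u⁻¹ * v * u)⁻¹ =
        conjAct 𝒢 ω e (deltaHom 𝒢 ω hω e u) v *
          (u⁻¹ * v⁻¹ * u * conjAct 𝒢 ω e (deltaHom 𝒢 ω hω e u) v) *
          (conjAct 𝒢 ω e (deltaHom 𝒢 ω hω e u) v)⁻¹ := by group
    rw [hre]
    exact key
  · intro C' Y σ hσd hσδ
    refine ⟨fun e x => (phiHom 𝒢 Y ω σ hσd e x).1,
      ⟨fun e x => (phiHom 𝒢 Y ω σ hσd e x).2.1, ?_, ?_, ?_, ?_, ?_, ?_⟩, ?_⟩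
    · intro e x y
      show (phiHom 𝒢 Y ω σ hσd e (x * y)).1 = _
      rw [map_mul]
      rfl
    · intro e x
      show (phiHom 𝒢 Y ω σ hσd e x⁻¹).1 = _
      rw [map_inv]
      rfl
    · intro e x hx
      show (phiHom 𝒢 Y ω σ hσd e x).1 = _
      rw [phi_peiffer 𝒢 Y ω hω σ hσd hσδ e x hx]
      rfl
    · intro e x
      exact congrArg Subtype.val (phi_delta 𝒢 Y ω hω σ hσd hσδ e x)
    · intro h x
      show (phiHom 𝒢 Y ω σ hσd (𝒢.r h) (mapAlong 𝒢 ω h x)).1 = _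
      rw [phi_mapAlong]
      rfl
    · intro e p
      exact congrArg Subtype.val (phiHom_of 𝒢 Y ω σ hσd e p)
    · rintro Φ ⟨hd, hmul, hinv, hP, hδ, hact, hgen⟩
      funext e x
      induction x using FreeGroup.induction_on with
      | C1 =>
        rw [hP e 1 (one_mem _)]
        show _ = (phiHom 𝒢 Y ω σ hσd e 1).1
        rw [map_one]
        rfl
      | of p =>
        rw [hgen e p]
        exact (congrArg Subtype.val (phiHom_of 𝒢 Y ω σ hσd e p)).symm
      | inv_of p ih =>
        rw [hinv, ih]
        show _ = (phiHom 𝒢 Y ω σ hσd e _).1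
        rw [map_inv]
        rfl
      | mul x y ihx ihy =>
        rw [hmul, ihx, ihy]
        show _ = (phiHom 𝒢 Y ω σ hσd e _).1
        rw [map_mul]
        rfl
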